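/- Let $p\in(1,+\infty)$, $s\in(0,1)$, $v\in L^p(\mathbb{R}^n)$, and $\Omega'\subset\mathbb{R}^n$ bounded and open. Then there exists a constant $\bar C_{n,p}>0$, independent of $s$, such that for every $h\in\mathbb{R}^n$, $\|\tau_h v - v\|_{L^p(\Omega')}^p \leq \bar C_{n,p}\, |h|^{sp}\, (1-s)\int_{B_{|h|}} \frac{\|\tau_y v - v\|_{L^p(\Omega'_{|h|})}^p}{|y|^{n+sp}}\,dy$, where $\tau_h v(x):=v(x+h)$ and $\Omega'_{|h|}$ is the $|h|$-neighborhood of $\Omega'$. -/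

import Mathlib

open MeasureTheory Metric
open scoped ENNReal NNReal

private lemma aux_split (p : ℝ) (hp : 1 ≤ p) (A B C : ℝ) :
    ENNReal.ofReal (|A - C| ^ p) ≤
      (2 : ℝ≥0∞) ^ (p - 1) * (ENNReal.ofReal (|A - B| ^ p) + ENNReal.ofReal (|B - C| ^ p)) := by
  have h0 : (0:ℝ) ≤ p := by linarith
  rw [← ENNReal.ofReal_rpow_of_nonneg (abs_nonneg _) h0,
    ← ENNReal.ofReal_rpow_of_nonneg (abs_nonneg _) h0,
    ← ENNReal.ofReal_rpow_of_nonneg (abs_nonneg _) h0]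
  calc ENNReal.ofReal |A - C| ^ p
      ≤ (ENNReal.ofReal |A - B| + ENNReal.ofReal |B - C|) ^ p := by
        refine ENNReal.rpow_le_rpow ?_ h0
        rw [← ENNReal.ofReal_add (abs_nonneg _) (abs_nonneg _)]
        exact ENNReal.ofReal_le_ofReal (abs_sub_le _ _ _)
    _ ≤ _ := ENNReal.rpow_add_le_mul_rpow_add_rpow _ _ hp

private lemma aux_scalar (p s R : ℝ) (n m : ℕ) (hs0 : 0 < s) (hR : 0 < R) :
    ((2:ℝ) ^ (-(p * (1 - s)))) ^ m * ((2:ℝ) ^ p) ^ m * (2:ℝ) ^ p *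
      ((2:ℝ) ^ (-(m:ℝ)) * R) ^ ((n:ℝ) + s * p) * ((((2:ℝ) ^ (-(m:ℝ)) * R) / 8) ^ n)⁻¹ =
    (2:ℝ) ^ p * 8 ^ n * R ^ (s * p) := by
  have h2 : (0:ℝ) < 2 := two_pos
  set Q : ℝ := (2:ℝ) ^ (-(m:ℝ)) with hQ
  have hQ0 : 0 < Q := Real.rpow_pos_of_pos h2 _
  have hρ0 : 0 < Q * R := mul_pos hQ0 hR
  have e1 : (Q * R) ^ ((n:ℝ) + s * p) = (Q * R) ^ (n:ℕ) * (Q * R) ^ (s * p) := by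
    rw [Real.rpow_add hρ0, Real.rpow_natCast]
  have e2 : ((Q * R) / 8) ^ n = (Q * R) ^ n / 8 ^ n := div_pow _ _ _
  have e3 : (Q * R) ^ (s * p) = Q ^ (s * p) * R ^ (s * p) := Real.mul_rpow hQ0.le hR.le
  have key : ((2:ℝ) ^ (-(p * (1 - s)))) ^ m * ((2:ℝ) ^ p) ^ m * Q ^ (s * p) = 1 := by
    rw [hQ, ← Real.rpow_natCast ((2:ℝ) ^ (-(p * (1 - s)))) m,
      ← Real.rpow_natCast ((2:ℝ) ^ p) m, ← Real.rpow_mul h2.le, ← Real.rpow_mul h2.le,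
      ← Real.rpow_mul h2.le, ← Real.rpow_add h2, ← Real.rpow_add h2]
    rw [show -(p * (1 - s)) * (m:ℝ) + p * (m:ℝ) + -(m:ℝ) * (s * p) = 0 by ring, Real.rpow_zero]
  have hQRn : ((Q * R) ^ n : ℝ) ≠ 0 := pow_ne_zero _ hρ0.ne'
  rw [e1, e2, e3]
  calc ((2:ℝ) ^ (-(p * (1 - s)))) ^ m * ((2:ℝ) ^ p) ^ m * (2:ℝ) ^ p *
        ((Q * R) ^ n * (Q ^ (s * p) * R ^ (s * p))) * ((Q * R) ^ n / 8 ^ n)⁻¹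
      = (((2:ℝ) ^ (-(p * (1 - s)))) ^ m * ((2:ℝ) ^ p) ^ m * Q ^ (s * p)) *
          ((2:ℝ) ^ p * 8 ^ n * R ^ (s * p)) * ((Q * R) ^ n * ((Q * R) ^ n)⁻¹) := by
        field_simp
    _ = (2:ℝ) ^ p * 8 ^ n * R ^ (s * p) := by
        rw [key, mul_inv_cancel₀ hQRn, one_mul, mul_one]

set_option maxHeartbeats 2000000 in
theorem stmt_17 (n : ℕ) (hn : 1 ≤ n) (p : ℝ) (hp : 1 < p)
    (v : EuclideanSpace ℝ (Fin n) → ℝ) (hv : Measurable v)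
    (hvLp : MemLp v (ENNReal.ofReal p) volume)
    (Ω' : Set (EuclideanSpace ℝ (Fin n))) (hΩ'o : IsOpen Ω')
    (hΩ'b : Bornology.IsBounded Ω') :
    ∃ C : ℝ, 0 < C ∧ ∀ s : ℝ, s ∈ Set.Ioo (0:ℝ) 1 → ∀ h : EuclideanSpace ℝ (Fin n),
      (∫⁻ x in Ω', ENNReal.ofReal (|v (x + h) - v x| ^ p)) ≤
        ENNReal.ofReal (C * ‖h‖ ^ (s * p) * (1 - s)) *
          ∫⁻ y in ball (0 : EuclideanSpace ℝ (Fin n)) ‖h‖,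
            (∫⁻ x in cthickening ‖h‖ Ω', ENNReal.ofReal (|v (x + y) - v x| ^ p)) /
              ENNReal.ofReal (‖y‖ ^ ((n : ℝ) + s * p)) := by
  have hp1 : (1:ℝ) ≤ p := hp.le
  have hp0 : (0:ℝ) < p := lt_trans one_pos hp
  haveI : Nonempty (Fin n) := Fin.pos_iff_nonempty.mp hn
  set B : ℝ≥0∞ := volume (ball (0 : EuclideanSpace ℝ (Fin n)) 1) with hBdef
  have hB0 : B ≠ 0 := (measure_ball_pos volume 0 one_pos).ne'
  have hBtop : B ≠ ⊤ := measure_ball_lt_top.ne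
  have hBt : 0 < B.toReal := ENNReal.toReal_pos hB0 hBtop
  have hlog2 : 0 < Real.log 2 := Real.log_pos one_lt_two
  have h2p : (0:ℝ) < (2:ℝ) ^ p := Real.rpow_pos_of_pos two_pos p
  have h8n : (0:ℝ) < (8:ℝ) ^ n := by positivity
  set C : ℝ := (2:ℝ) ^ p * 8 ^ n * (p * Real.log 2) / B.toReal with hCdef
  have hC : 0 < C := div_pos (mul_pos (mul_pos h2p h8n) (mul_pos hp0 hlog2)) hBt
  refine ⟨C, hC, ?_⟩
  rintro s ⟨hs0, hs1⟩ h
  by_cases hzero : h = 0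
  · subst hzero
    simp only [add_zero, sub_self, abs_zero, Real.zero_rpow hp0.ne', ENNReal.ofReal_zero,
      lintegral_zero]
    exact zero_le
  have hR : 0 < ‖h‖ := norm_pos_iff.mpr hzero
  -- abbreviations matching the goal
  set L : ℝ≥0∞ := ∫⁻ x in Ω', ENNReal.ofReal (|v (x + h) - v x| ^ p) with hLdef
  set I : ℝ≥0∞ := ∫⁻ y in ball (0 : EuclideanSpace ℝ (Fin n)) ‖h‖,
      (∫⁻ x in cthickening ‖h‖ Ω', ENNReal.ofReal (|v (x + y) - v x| ^ p)) /
        ENNReal.ofReal (‖y‖ ^ ((n : ℝ) + s * p)) with hIdef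
  -- local definitions
  set f : EuclideanSpace ℝ (Fin n) → EuclideanSpace ℝ (Fin n) → ℝ≥0∞ :=
    fun y x => ENNReal.ofReal (|v (x + y) - v x| ^ p) with hf
  set F : EuclideanSpace ℝ (Fin n) → ℝ≥0∞ :=
    fun y => ∫⁻ x in cthickening ‖h‖ Ω', f y x with hF
  set G : EuclideanSpace ℝ (Fin n) → ℝ≥0∞ :=
    fun y => F y / ENNReal.ofReal (‖y‖ ^ ((n : ℝ) + s * p)) with hG
  have hLf : L = ∫⁻ x in Ω', f h x := by simp only [hLdef, hf]
  have hIf : I = ∫⁻ y in ball (0 : EuclideanSpace ℝ (Fin n)) ‖h‖, G y := by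
    simp only [hIdef, hG, hF, hf]
  set q : ℕ → ℝ := fun m => (2:ℝ) ^ (-(m:ℝ)) with hq
  have hqpos : ∀ m, 0 < q m := fun m => Real.rpow_pos_of_pos two_pos _
  have hqle1 : ∀ m, q m ≤ 1 := fun m =>
    Real.rpow_le_one_of_one_le_of_nonpos one_le_two (neg_nonpos.mpr (Nat.cast_nonneg m))
  have hq0 : q 0 = 1 := by simp [hq]
  have hqsucc : ∀ m, q (m + 1) + q (m + 1) = q m := by
    intro m
    have hval : q (m + 1) = q m / 2 := by
      simp only [hq]
      push_cast
      rw [show -((m:ℝ) + 1) = -(m:ℝ) + (-1) by ring, Real.rpow_add two_pos,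
        Real.rpow_neg_one]
      ring
    rw [hval]; ring
  set ρ : ℕ → ℝ := fun m => q m * ‖h‖ with hρ
  have hρpos : ∀ m, 0 < ρ m := fun m => mul_pos (hqpos m) hR
  have hρle : ∀ m, ρ m ≤ ‖h‖ := by
    intro m
    calc q m * ‖h‖ ≤ 1 * ‖h‖ := mul_le_mul_of_nonneg_right (hqle1 m) hR.le
      _ = ‖h‖ := one_mul _
  set w : ℕ → EuclideanSpace ℝ (Fin n) := fun m => (q m) • h with hwdef
  have hwnorm : ∀ m, ‖w m‖ = ρ m := by
    intro m
    simp only [hwdef, hρ, norm_smul, Real.norm_eq_abs, abs_of_pos (hqpos m)]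
  have hwsucc : ∀ m, w (m + 1) + w (m + 1) = w m := fun m => by
    simp only [hwdef]; rw [← add_smul, hqsucc]
  have hw0 : w 0 = h := by simp only [hwdef, hq0, one_smul]
  have hqhalf : ∀ m, q (m + 1) * ‖h‖ = q m * ‖h‖ / 2 := by
    intro m
    have := hqsucc m
    nlinarith [hR]
  have hρsucc : ∀ m, ρ (m + 1) = ρ m / 2 := by
    intro m; simp only [hρ]; exact hqhalf m
  set S : ℕ → Set (EuclideanSpace ℝ (Fin n)) :=
    fun m => cthickening ((1 - q m) * ‖h‖) Ω' with hS
  set D : ℕ → Set (EuclideanSpace ℝ (Fin n)) :=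
    fun m => ball (w (m + 1)) (ρ m / 8) with hD
  -- constants
  set c2 : ℝ≥0∞ := (2:ℝ≥0∞) ^ (p - 1) with hc2
  set c3 : ℝ≥0∞ := (2:ℝ≥0∞) ^ p with hc3
  have h2ne0 : (2:ℝ≥0∞) ≠ 0 := by norm_num
  have h2netop : (2:ℝ≥0∞) ≠ ⊤ := by norm_num
  have hc2c3 : c2 * 2 = c3 := by
    simp only [hc2, hc3]
    calc (2:ℝ≥0∞) ^ (p - 1) * 2 = 2 ^ (p - 1) * 2 ^ (1:ℝ) := by rw [ENNReal.rpow_one]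
      _ = 2 ^ (p - 1 + 1) := (ENNReal.rpow_add _ _ h2ne0 h2netop).symm
      _ = 2 ^ p := by ring_nf
  have hc2top : c2 ≠ ⊤ := by
    simp only [hc2]; exact ENNReal.rpow_ne_top_of_nonneg (by linarith) h2netop
  have hc3of : c3 = ENNReal.ofReal ((2:ℝ) ^ p) := by
    simp only [hc3]
    rw [← ENNReal.ofReal_rpow_of_pos two_pos]
    norm_num
  -- measurability
  have hfmeas : ∀ y, Measurable (f y) := by
    intro y
    simp only [hf]
    exact (((hv.comp (measurable_add_const y)).sub hv).abs.pow measurable_const).ennreal_ofReal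
  have hFmeas : Measurable F := by
    have hm : Measurable (fun z : EuclideanSpace ℝ (Fin n) × EuclideanSpace ℝ (Fin n) =>
        ENNReal.ofReal (|v (z.2 + z.1) - v z.2| ^ p)) :=
      (((hv.comp (measurable_snd.add measurable_fst)).sub
        (hv.comp measurable_snd)).abs.pow measurable_const).ennreal_ofReal
    exact hm.lintegral_prod_right'
  have hGmeas : Measurable G := by
    simp only [hG]
    exact hFmeas.div (measurable_norm.pow measurable_const).ennreal_ofReal
  -- translation estimate
  have hkey : ∀ (a : EuclideanSpace ℝ (Fin n)) (S₁ T : Set (EuclideanSpace ℝ (Fin n)))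
      (g : EuclideanSpace ℝ (Fin n) → ℝ≥0∞),
      (∀ x ∈ S₁, x + a ∈ T) → ∫⁻ x in S₁, g (x + a) ≤ ∫⁻ x in T, g x := by
    intro a S₁ T g hST
    calc ∫⁻ x in S₁, g (x + a)
        ≤ ∫⁻ x in (fun x => x + a) ⁻¹' T, g (x + a) := lintegral_mono_set hST
      _ = ∫⁻ x in T, g x :=
        (measurePreserving_add_right volume a).setLIntegral_comp_preimage_emb
          (measurableEmbedding_addRight a) g T
  -- cthickening translation
  have hthick : ∀ (r r' : ℝ) (x y : EuclideanSpace ℝ (Fin n)), 0 ≤ r →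
      x ∈ cthickening r Ω' → ‖y‖ + r ≤ r' → x + y ∈ cthickening r' Ω' := by
    intro r r' x y hr hx hle
    rw [mem_cthickening_iff] at hx ⊢
    calc EMetric.infEdist (x + y) Ω'
        ≤ edist (x + y) x + EMetric.infEdist x Ω' := EMetric.infEdist_le_edist_add_infEdist
      _ ≤ ENNReal.ofReal ‖y‖ + ENNReal.ofReal r := by
          gcongr
          rw [edist_dist, dist_self_add_left]
          exact hx
      _ = ENNReal.ofReal (‖y‖ + r) := (ENNReal.ofReal_add (norm_nonneg _) hr).symm
      _ ≤ ENNReal.ofReal r' := ENNReal.ofReal_le_ofReal hle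
  -- pointwise splitting
  have hfsplit : ∀ (a b x : EuclideanSpace ℝ (Fin n)),
      f (a + b) x ≤ c2 * (f b (x + a) + f a x) := by
    intro a b x
    have h' := aux_split p hp1 (v (x + (a + b))) (v (x + a)) (v x)
    simpa only [hf, hc2, add_assoc] using h'
  -- annulus bounds for D m
  have hw_in : ∀ m, ∀ y ∈ D m, 3/8 * ρ m ≤ ‖y‖ ∧ ‖y‖ ≤ 5/8 * ρ m := by
    intro m y hy
    simp only [hD] at hy
    have h1 : ‖y - w (m + 1)‖ < ρ m / 8 := by rwa [mem_ball_iff_norm] at hy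
    have h2 : ‖w (m + 1)‖ = ρ m / 2 := by rw [hwnorm, hρsucc]
    have h3 : ‖w (m + 1)‖ - ‖y‖ ≤ ‖w (m + 1) - y‖ := norm_sub_norm_le _ _
    have h4 : ‖w (m + 1) - y‖ = ‖y - w (m + 1)‖ := norm_sub_rev _ _
    have h5 : ‖y‖ - ‖w (m + 1)‖ ≤ ‖y - w (m + 1)‖ := norm_sub_norm_le _ _
    constructor <;> linarith
  -- Step 1 : dyadic doubling
  have hstep1 : ∀ m, L ≤ c3 ^ m * ∫⁻ x in S m, f (w m) x := by
    intro m
    induction m with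
    | zero =>
      simp only [pow_zero, one_mul, hw0]
      rw [hLf]
      refine lintegral_mono_set ?_
      simp only [hS, hq0]
      simpa using subset_closure
    | succ m ih =>
      refine le_trans ih ?_
      rw [pow_succ, mul_assoc]
      gcongr
      have hsplit : ∀ x, f (w m) x ≤ c2 * (f (w (m + 1)) (x + w (m + 1)) + f (w (m + 1)) x) := by
        intro x
        have h' := hfsplit (w (m + 1)) (w (m + 1)) x
        rwa [hwsucc m] at h'
      have hrad : 0 ≤ (1 - q m) * ‖h‖ :=
        mul_nonneg (by linarith [hqle1 m]) (norm_nonneg h)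
      have hqmrel : q m * ‖h‖ = q (m + 1) * ‖h‖ + q (m + 1) * ‖h‖ := by
        rw [← hqsucc m]; ring
      calc ∫⁻ x in S m, f (w m) x
          ≤ ∫⁻ x in S m, c2 * (f (w (m + 1)) (x + w (m + 1)) + f (w (m + 1)) x) :=
            lintegral_mono fun x => hsplit x
        _ = c2 * ((∫⁻ x in S m, f (w (m + 1)) (x + w (m + 1))) +
              ∫⁻ x in S m, f (w (m + 1)) x) := by
            have hm1 : Measurable fun x => f (w (m + 1)) (x + w (m + 1)) :=
              (hfmeas _).comp (measurable_add_const _)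
            rw [lintegral_const_mul' _ _ hc2top, lintegral_add_left hm1]
        _ ≤ c2 * ((∫⁻ x in S (m + 1), f (w (m + 1)) x) +
              ∫⁻ x in S (m + 1), f (w (m + 1)) x) := by
            refine mul_le_mul_right (add_le_add ?_ ?_) c2
            · refine hkey (w (m + 1)) (S m) (S (m + 1)) _ ?_
              intro x hx
              simp only [hS] at hx ⊢
              refine hthick _ _ x _ hrad hx ?_
              rw [hwnorm]
              simp only [hρ]
              nlinarith [hqmrel]
            · refine lintegral_mono_set ?_
              simp only [hS]
              refine cthickening_mono ?_ Ω'
              nlinarith [mul_pos (hqpos (m + 1)) hR, hqmrel]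
        _ = c3 * ∫⁻ x in S (m + 1), f (w (m + 1)) x := by rw [← hc2c3]; ring
  -- Step 2 : averaging over D m
  have hstep2 : ∀ m, volume (D m) * (∫⁻ x in S m, f (w m) x) ≤ c3 * ∫⁻ y in D m, F y := by
    intro m
    have hrad : 0 ≤ (1 - q m) * ‖h‖ := mul_nonneg (by linarith [hqle1 m]) (norm_nonneg h)
    have hpt : ∀ y ∈ D m, (∫⁻ x in S m, f (w m) x) ≤ c2 * (F (w m - y) + F y) := by
      intro y hy
      obtain ⟨hy1, hy2⟩ := hw_in m y hy
      have hyρ : ‖y‖ ≤ ρ m := by linarith [hρpos m]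
      have hsplit' : ∀ x, f (w m) x ≤ c2 * (f (w m - y) (x + y) + f y x) := by
        intro x
        have h' := hfsplit y (w m - y) x
        rwa [show y + (w m - y) = w m from by abel] at h'
      calc ∫⁻ x in S m, f (w m) x
          ≤ ∫⁻ x in S m, c2 * (f (w m - y) (x + y) + f y x) := lintegral_mono fun x => hsplit' x
        _ = c2 * ((∫⁻ x in S m, f (w m - y) (x + y)) + ∫⁻ x in S m, f y x) := by
            have hm1 : Measurable fun x => f (w m - y) (x + y) :=
              (hfmeas _).comp (measurable_add_const _)
            rw [lintegral_const_mul' _ _ hc2top, lintegral_add_left hm1]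
        _ ≤ c2 * (F (w m - y) + F y) := by
            refine mul_le_mul_right (add_le_add ?_ ?_) c2
            · rw [hF]
              refine hkey y (S m) (cthickening ‖h‖ Ω') _ ?_
              intro x hx
              simp only [hS] at hx
              refine hthick _ _ x _ hrad hx ?_
              simp only [hρ] at hyρ
              linarith
            · rw [hF]
              refine lintegral_mono_set ?_
              simp only [hS]
              refine cthickening_mono ?_ Ω'
              nlinarith [mul_pos (hqpos m) hR]
    have hrefl : ∫⁻ y in D m, F (w m - y) = ∫⁻ y in D m, F y := by
      have hpre : (fun y => w m - y) ⁻¹' (D m) = D m := by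
        ext y
        simp only [hD, Set.mem_preimage, mem_ball, dist_eq_norm]
        rw [show w m - y - w (m + 1) = w (m + 1) - y from by rw [← hwsucc m]; abel,
          norm_sub_rev]
      conv_lhs => rw [← hpre]
      exact (Measure.measurePreserving_sub_left volume (w m)).setLIntegral_comp_preimage_emb
        (MeasurableEquiv.subLeft (w m)).measurableEmbedding F (D m)
    have hmeasR : Measurable (fun y => c2 * (F (w m - y) + F y)) :=
      measurable_const.mul ((hFmeas.comp (measurable_const.sub measurable_id)).add hFmeas)
    calc volume (D m) * (∫⁻ x in S m, f (w m) x)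
        = ∫⁻ _ in D m, (∫⁻ x in S m, f (w m) x) ∂volume := by
          rw [setLIntegral_const, mul_comm]
      _ ≤ ∫⁻ y in D m, c2 * (F (w m - y) + F y) ∂volume := setLIntegral_mono hmeasR hpt
      _ = c2 * ((∫⁻ y in D m, F (w m - y)) + ∫⁻ y in D m, F y) := by
          have hm1 : Measurable fun y => F (w m - y) :=
            hFmeas.comp (measurable_const.sub measurable_id)
          rw [lintegral_const_mul' _ _ hc2top, lintegral_add_left hm1]
      _ = c3 * ∫⁻ y in D m, F y := by rw [hrefl, ← hc2c3]; ring
  -- Step 3 : from F to G on D m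
  have hexp0 : (0:ℝ) ≤ (n:ℝ) + s * p := by positivity
  have hstep3 : ∀ m, (∫⁻ y in D m, F y) ≤
      ENNReal.ofReal (ρ m ^ ((n:ℝ) + s * p)) * ∫⁻ y in D m, G y := by
    intro m
    rw [← lintegral_const_mul' _ _ ENNReal.ofReal_ne_top]
    refine setLIntegral_mono (measurable_const.mul hGmeas) ?_
    intro y hy
    obtain ⟨hy1, hy2⟩ := hw_in m y hy
    have hy0 : 0 < ‖y‖ := lt_of_lt_of_le (by nlinarith [hρpos m]) hy1
    have hden0 : ENNReal.ofReal (‖y‖ ^ ((n:ℝ) + s * p)) ≠ 0 :=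
      (ENNReal.ofReal_pos.mpr (Real.rpow_pos_of_pos hy0 _)).ne'
    have hFy : F y = ENNReal.ofReal (‖y‖ ^ ((n:ℝ) + s * p)) * G y := by
      simp only [hG]
      rw [ENNReal.mul_div_cancel hden0 ENNReal.ofReal_ne_top]
    rw [hFy]
    refine mul_le_mul_left (ENNReal.ofReal_le_ofReal
      (Real.rpow_le_rpow (norm_nonneg y) (by linarith [hρpos m]) hexp0)) _
  -- volume of D m
  have hvol : ∀ m, volume (D m) = ENNReal.ofReal ((ρ m / 8) ^ n) * B := by
    intro m
    simp only [hD]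
    rw [Measure.addHaar_ball volume (w (m + 1)) (by positivity : (0:ℝ) ≤ ρ m / 8),
      finrank_euclideanSpace_fin]
  -- the geometric weight
  set t : ℝ := (2:ℝ) ^ (-(p * (1 - s))) with htdef
  have ht0 : 0 < t := Real.rpow_pos_of_pos two_pos _
  have ht1 : t < 1 :=
    Real.rpow_lt_one_of_one_lt_of_neg one_lt_two (by nlinarith)
  set K : ℝ≥0∞ := ENNReal.ofReal ((2:ℝ) ^ p * 8 ^ n * ‖h‖ ^ (s * p)) / B with hK
  -- per-scale estimate
  have hperm : ∀ m, ENNReal.ofReal t ^ m * L ≤ K * ∫⁻ y in D m, G y := by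
    intro m
    have hDvol0 : volume (D m) ≠ 0 := by
      simp only [hD]
      exact (measure_ball_pos volume _ (by positivity)).ne'
    have hDvolt : volume (D m) ≠ ⊤ := by
      simp only [hD]; exact measure_ball_lt_top.ne
    have hY : (∫⁻ x in S m, f (w m) x) ≤
        c3 * (ENNReal.ofReal (ρ m ^ ((n:ℝ) + s * p)) * ∫⁻ y in D m, G y) / volume (D m) := by
      rw [ENNReal.le_div_iff_mul_le (Or.inl hDvol0) (Or.inl hDvolt)]
      calc (∫⁻ x in S m, f (w m) x) * volume (D m)
          = volume (D m) * ∫⁻ x in S m, f (w m) x := mul_comm _ _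
        _ ≤ c3 * ∫⁻ y in D m, F y := hstep2 m
        _ ≤ c3 * (ENNReal.ofReal (ρ m ^ ((n:ℝ) + s * p)) * ∫⁻ y in D m, G y) :=
            mul_le_mul_right (hstep3 m) _
    have hL1 : L ≤ c3 ^ m *
        (c3 * (ENNReal.ofReal (ρ m ^ ((n:ℝ) + s * p)) * ∫⁻ y in D m, G y) / volume (D m)) :=
      le_trans (hstep1 m) (mul_le_mul_right hY _)
    have hcoef : ENNReal.ofReal t ^ m * c3 ^ m * c3 *
        ENNReal.ofReal (ρ m ^ ((n:ℝ) + s * p)) * (volume (D m))⁻¹ = K := by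
      have hvinv : (volume (D m))⁻¹ =
          ENNReal.ofReal (((ρ m / 8) ^ n)⁻¹) * B⁻¹ := by
        rw [hvol m, ENNReal.mul_inv (Or.inl (ENNReal.ofReal_pos.mpr (by positivity)).ne')
          (Or.inl ENNReal.ofReal_ne_top),
          ENNReal.ofReal_inv_of_pos (by positivity)]
      rw [hvinv, hc3of, ← ENNReal.ofReal_pow ht0.le, ← ENNReal.ofReal_pow h2p.le, hK]
      rw [← ENNReal.ofReal_mul (by positivity), ← ENNReal.ofReal_mul (by positivity),
        ← ENNReal.ofReal_mul (by positivity), ← mul_assoc, ← ENNReal.ofReal_mul (by positivity)]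
      rw [ENNReal.div_eq_inv_mul, mul_comm B⁻¹ _]
      congr 1
      have := aux_scalar p s ‖h‖ n m hs0 hR
      simp only [hρ, hq, htdef]
      exact congrArg ENNReal.ofReal this
    calc ENNReal.ofReal t ^ m * L
        ≤ ENNReal.ofReal t ^ m * (c3 ^ m *
            (c3 * (ENNReal.ofReal (ρ m ^ ((n:ℝ) + s * p)) * ∫⁻ y in D m, G y) /
              volume (D m))) := mul_le_mul_right hL1 _
      _ = (ENNReal.ofReal t ^ m * c3 ^ m * c3 *
            ENNReal.ofReal (ρ m ^ ((n:ℝ) + s * p)) * (volume (D m))⁻¹) *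
            ∫⁻ y in D m, G y := by
          simp only [div_eq_mul_inv]; ring
      _ = K * ∫⁻ y in D m, G y := by rw [hcoef]
  -- disjointness and inclusion of the D m
  have hDdisj : Pairwise (Function.onFun Disjoint D) := by
    have hlt : ∀ i j, i < j → Disjoint (D i) (D j) := by
      intro i j hij
      rw [Set.disjoint_left]
      intro y hyi hyj
      obtain ⟨hi1, hi2⟩ := hw_in i y hyi
      obtain ⟨hj1, hj2⟩ := hw_in j y hyj
      have hqij : q j ≤ q (i + 1) := by
        simp only [hq]
        refine Real.rpow_le_rpow_of_exponent_le one_le_two ?_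
        have : (i:ℝ) + 1 ≤ (j:ℝ) := by exact_mod_cast hij
        push_cast
        linarith
      have hρij : ρ j ≤ ρ (i + 1) := by
        simp only [hρ]
        exact mul_le_mul_of_nonneg_right hqij (norm_nonneg h)
      have hρi1 : ρ (i + 1) = ρ i / 2 := hρsucc i
      have := hρpos i
      linarith
    intro i j hij
    rcases hij.lt_or_gt with h1 | h1
    · exact hlt _ _ h1
    · exact (hlt _ _ h1).symm
  have hDsubball : ∀ m, D m ⊆ ball (0 : EuclideanSpace ℝ (Fin n)) ‖h‖ := by
    intro m y hy
    obtain ⟨-, hy2⟩ := hw_in m y hy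
    rw [mem_ball, dist_zero_right]
    have := hρle m; have := hρpos m
    linarith
  have hDmeas : ∀ m, MeasurableSet (D m) := by
    intro m; simp only [hD]; exact measurableSet_ball
  have hsum2 : (∑' m, ∫⁻ y in D m, G y) ≤ I := by
    rw [hIf]
    calc (∑' m, ∫⁻ y in D m, G y) = ∫⁻ y in ⋃ m, D m, G y :=
        (lintegral_iUnion hDmeas hDdisj G).symm
      _ ≤ ∫⁻ y in ball (0 : EuclideanSpace ℝ (Fin n)) ‖h‖, G y :=
        lintegral_mono_set (Set.iUnion_subset hDsubball)
  -- sum the per-scale estimates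
  have hfinal1 : (1 - ENNReal.ofReal t)⁻¹ * L ≤ K * I := by
    rw [← ENNReal.tsum_geometric, ← ENNReal.tsum_mul_right]
    calc (∑' m, ENNReal.ofReal t ^ m * L) ≤ ∑' m, K * ∫⁻ y in D m, G y :=
        ENNReal.tsum_le_tsum hperm
      _ = K * ∑' m, ∫⁻ y in D m, G y := ENNReal.tsum_mul_left
      _ ≤ K * I := mul_le_mul_right hsum2 K
  have hoft1 : ENNReal.ofReal t < 1 := ENNReal.ofReal_lt_one.mpr ht1
  have hone : (1:ℝ≥0∞) - ENNReal.ofReal t ≠ 0 := by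
    intro hc
    exact absurd (tsub_eq_zero_iff_le.mp hc) (not_le.mpr hoft1)
  have honet : (1:ℝ≥0∞) - ENNReal.ofReal t ≠ ⊤ :=
    ne_top_of_le_ne_top ENNReal.one_ne_top tsub_le_self
  have hLbound : L ≤ (1 - ENNReal.ofReal t) * (K * I) := by
    have h' := mul_le_mul_right hfinal1 (1 - ENNReal.ofReal t)
    rwa [← mul_assoc, ENNReal.mul_inv_cancel hone honet, one_mul] at h'
  have h1t : (1:ℝ≥0∞) - ENNReal.ofReal t = ENNReal.ofReal (1 - t) := by
    rw [ENNReal.ofReal_sub _ ht0.le, ENNReal.ofReal_one]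
  have hKbound : ENNReal.ofReal (1 - t) * K ≤ ENNReal.ofReal (C * ‖h‖ ^ (s * p) * (1 - s)) := by
    have hBre : B = ENNReal.ofReal B.toReal := (ENNReal.ofReal_toReal hBtop).symm
    rw [hK, hBre, ← ENNReal.ofReal_div_of_pos hBt, ← ENNReal.ofReal_mul (by linarith)]
    apply ENNReal.ofReal_le_ofReal
    have hkey2 : 1 - t ≤ p * Real.log 2 * (1 - s) := by
      have hx : t = Real.exp (-(p * (1 - s) * Real.log 2)) := by
        rw [htdef, Real.rpow_def_of_pos two_pos]; ring_nf
      have h' := Real.add_one_le_exp (-(p * (1 - s) * Real.log 2))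
      rw [hx]; nlinarith
    have hA : (0:ℝ) ≤ (2:ℝ) ^ p * 8 ^ n * ‖h‖ ^ (s * p) / B.toReal := by positivity
    calc (1 - t) * ((2:ℝ) ^ p * 8 ^ n * ‖h‖ ^ (s * p) / B.toReal)
        ≤ (p * Real.log 2 * (1 - s)) * ((2:ℝ) ^ p * 8 ^ n * ‖h‖ ^ (s * p) / B.toReal) :=
          mul_le_mul_of_nonneg_right hkey2 hA
      _ = C * ‖h‖ ^ (s * p) * (1 - s) := by rw [hCdef]; ring
  calc L ≤ (1 - ENNReal.ofReal t) * (K * I) := hLbound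
    _ = (ENNReal.ofReal (1 - t) * K) * I := by rw [h1t, mul_assoc]
    _ ≤ ENNReal.ofReal (C * ‖h‖ ^ (s * p) * (1 - s)) * I :=
        mul_le_mul_left hKbound I
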